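/- arXiv:2307.14096 — 2 statements merged into one kernel-verified Lean document; each statement's English description precedes it below -/
import Mathlib

section
/- Let κ ∈ ℝⁿ with κ₁ ≥ κ₂ ≥ ... ≥ κ_n and suppose κ lies in the Garding cone Γ_m⁺ (i.e., σ_l(κ) > 0 for all 1 ≤ l ≤ m). Then for 1 ≤ m ≤ n, κ₁·σ_{m−1,1}(κ) ≥ (m/n)·σ_m(κ). -/
open Polynomial

namespace MyEsymmAux


lemma mesymm_zero (S : Multiset ℝ) : S.esymm 0 = 1 := by
  simp [Multiset.esymm]

lemma mesymm_cons (a : ℝ) (S : Multiset ℝ) (k : ℕ) :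
    (a ::ₘ S).esymm (k + 1) = S.esymm (k + 1) + a * S.esymm k := by
  rw [Multiset.esymm, Multiset.powersetCard_cons, Multiset.map_add, Multiset.sum_add,
    Multiset.map_map]
  rw [Multiset.esymm, Multiset.esymm, ← Multiset.sum_map_mul_left]
  congr 1
  exact congrArg Multiset.sum (Multiset.map_congr rfl (fun t _ => by simp))

lemma mesymm_eq_zero (S : Multiset ℝ) (k : ℕ) (h : Multiset.card S < k) : S.esymm k = 0 := by
  rw [Multiset.esymm, Multiset.powersetCard_eq_empty _ h]
  rfl

lemma mesymm_card (S : Multiset ℝ) : S.esymm (Multiset.card S) = S.prod := by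
  induction S using Multiset.induction_on with
  | empty => simp [mesymm_zero]
  | cons a S ih =>
      rw [Multiset.card_cons, mesymm_cons, Multiset.prod_cons, ih,
        mesymm_eq_zero S _ (Nat.lt_succ_self _), zero_add]



lemma deriv_step (S : Multiset ℝ) (D : ℕ) (hc : Multiset.card S = D + 1) :
    ∃ S' : Multiset ℝ, Multiset.card S' = D ∧ ∀ l, l ≤ D →
      ((D : ℝ) + 1) * S'.esymm l = (((D : ℝ) + 1) - l) * S.esymm l := by
  set p : Polynomial ℝ := (S.map fun a => X - C a).prod with hp
  have hroots : p.roots = S := roots_multiset_prod_X_sub_C S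
  have hmonic : p.Monic := monic_multiset_prod_of_monic _ _ fun a _ => monic_X_sub_C a
  have hdeg : p.natDegree = D + 1 := by
    rw [hp, natDegree_multiset_prod_X_sub_C_eq_card, hc]
  set q := derivative p with hq
  have hq2 : q.natDegree ≤ D := by
    have h := natDegree_derivative_lt (p := p) (by omega)
    rw [← hq] at h
    omega
  have hq1 : D + 1 ≤ Multiset.card q.roots + 1 := by
    have := p.card_roots_le_derivative
    rw [hroots, hc] at this
    exact this
  have hqroots : Multiset.card q.roots = D :=
    le_antisymm (le_trans q.card_roots' hq2) (by omega)
  have hqdeg : q.natDegree = D :=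
    le_antisymm hq2 (le_trans (by omega) q.card_roots')
  have hlead : q.leadingCoeff = (D : ℝ) + 1 := by
    rw [leadingCoeff, hqdeg, hq, coeff_derivative, ← hdeg, ← leadingCoeff, hmonic.leadingCoeff]
    push_cast
    ring
  refine ⟨q.roots, hqroots, fun l hl => ?_⟩
  have h1 : q.coeff (D - l) = q.leadingCoeff * (-1) ^ (q.natDegree - (D - l)) *
      q.roots.esymm (q.natDegree - (D - l)) :=
    coeff_eq_esymm_roots_of_card (by rw [hqroots, hqdeg]) (by omega)
  have h2 : q.coeff (D - l) = p.coeff (D - l + 1) * ((D : ℝ) - l + 1) := by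
    rw [hq, coeff_derivative]
    push_cast [Nat.cast_sub hl]
    ring
  have h3 : p.coeff (D - l + 1) = (-1) ^ l * S.esymm l := by
    have hcard : D - l + 1 ≤ Multiset.card S := by omega
    have := Multiset.prod_X_sub_C_coeff S hcard
    rw [← hp] at this
    rw [this, hc]
    congr 2 <;> omega
  rw [hqdeg, hlead] at h1
  have hDl : D - (D - l) = l := by omega
  rw [hDl] at h1
  rw [h3] at h2
  have key : ((-1 : ℝ)) ^ l * (((D : ℝ) + 1) * q.roots.esymm l) =
      ((-1 : ℝ)) ^ l * ((((D : ℝ) + 1) - l) * S.esymm l) := by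
    rw [h2] at h1
    ring_nf
    ring_nf at h1
    linarith [h1]
  exact mul_left_cancel₀ (pow_ne_zero l (by norm_num : (-1:ℝ) ≠ 0)) key



lemma reduce (c : ℕ) : ∀ (d : ℕ) (S : Multiset ℝ), Multiset.card S = c + d →
    ∃ S' : Multiset ℝ, Multiset.card S' = c ∧
      ∀ i ≤ c, ∃ r : ℝ, 0 < r ∧ S'.esymm i = r * S.esymm i := by
  intro d
  induction d with
  | zero => exact fun S h => ⟨S, h, fun i _ => ⟨1, one_pos, (one_mul _).symm⟩⟩
  | succ d ih =>
    intro S h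
    obtain ⟨S₁, hS₁c, hS₁⟩ := deriv_step S (c + d) (by omega)
    obtain ⟨S', h1, h2⟩ := ih S₁ hS₁c
    refine ⟨S', h1, fun i hi => ?_⟩
    obtain ⟨r, hr, he⟩ := h2 i hi
    have hkey := hS₁ i (by omega)
    have hpos : (0 : ℝ) < ((c + d : ℕ) : ℝ) + 1 := by positivity
    have hnum : (0 : ℝ) < (((c + d : ℕ) : ℝ) + 1) - i := by
      have : (i : ℝ) ≤ ((c + d : ℕ) : ℝ) := by exact_mod_cast Nat.le_add_right_of_le hi
      linarith
    refine ⟨r * ((((c + d : ℕ) : ℝ) + 1 - i) / (((c + d : ℕ) : ℝ) + 1)), by positivity, ?_⟩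
    rw [he]
    have : S₁.esymm i = ((((c + d : ℕ) : ℝ) + 1 - i) / (((c + d : ℕ) : ℝ) + 1)) * S.esymm i := by
      field_simp
      push_cast at hkey ⊢
      linarith [hkey]
    rw [this]; ring

lemma mesymm_inv (S : Multiset ℝ) (h0 : (0:ℝ) ∉ S) :
    ∀ l ≤ Multiset.card S,
      (S.map fun x => x⁻¹).esymm l * S.prod = S.esymm (Multiset.card S - l) := by
  induction S using Multiset.induction_on with
  | empty =>
    intro l hl
    simp only [Multiset.card_zero, Nat.le_zero] at hl
    subst hl
    simp [mesymm_zero]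
  | cons a S ih =>
    have ha : a ≠ 0 := fun h => h0 (h ▸ Multiset.mem_cons_self a S)
    have h0' : (0:ℝ) ∉ S := fun h => h0 (Multiset.mem_cons_of_mem h)
    intro l hl
    rw [Multiset.card_cons] at hl ⊢
    rw [Multiset.map_cons, Multiset.prod_cons]
    cases l with
    | zero =>
      rw [mesymm_zero, Nat.sub_zero, ← Multiset.card_cons, mesymm_card, Multiset.prod_cons]
      ring
    | succ l =>
      rw [mesymm_cons]
      rcases Nat.lt_or_ge l (Multiset.card S) with hlt | hge
      · have e1 := ih h0' (l+1) hlt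
        have e2 := ih h0' l (by omega)
        have hsub : Multiset.card S + 1 - (l + 1) = (Multiset.card S - (l+1)) + 1 := by omega
        rw [hsub, mesymm_cons]
        have hsub2 : Multiset.card S - (l + 1) + 1 = Multiset.card S - l := by omega
        rw [hsub2]
        have expand : (S.map fun x => x⁻¹).esymm (l + 1) * (a * S.prod)
            + a⁻¹ * (S.map fun x => x⁻¹).esymm l * (a * S.prod)
            = a * ((S.map fun x => x⁻¹).esymm (l+1) * S.prod)
            + ((S.map fun x => x⁻¹).esymm l * S.prod) := by
          field_simp
        rw [add_mul, expand, e1, e2]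
        ring
      · have hl' : l = Multiset.card S := by omega
        subst hl'
        rw [mesymm_eq_zero (S.map fun x => x⁻¹) _ (by simp)]
        have e2 := ih h0' (Multiset.card S) le_rfl
        rw [Nat.sub_self] at e2
        have hsub : Multiset.card S + 1 - (Multiset.card S + 1) = 0 := by omega
        rw [hsub, mesymm_zero]
        rw [zero_add]
        calc a⁻¹ * (S.map fun x => x⁻¹).esymm (Multiset.card S) * (a * S.prod)
            = (a⁻¹ * a) * ((S.map fun x => x⁻¹).esymm (Multiset.card S) * S.prod) := by ring
          _ = 1 := by rw [inv_mul_cancel₀ ha, e2, mesymm_zero]; ring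

lemma weak_newton (S : Multiset ℝ) (j : ℕ) (hj : 1 ≤ j)
    (h1 : 0 < S.esymm (j - 1)) (h2 : S.esymm j = 0) (h3 : 0 < S.esymm (j + 1)) : False := by
  have hcard : j + 1 ≤ Multiset.card S := by
    by_contra h
    exact absurd (mesymm_eq_zero S (j+1) (by omega)) (ne_of_gt h3)
  obtain ⟨S₁, hc₁, hr₁⟩ := reduce (j+1) (Multiset.card S - (j+1)) S (by omega)
  obtain ⟨r₁, hr₁p, he₁⟩ := hr₁ (j-1) (by omega)
  obtain ⟨r₂, hr₂p, he₂⟩ := hr₁ j (by omega)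
  obtain ⟨r₃, hr₃p, he₃⟩ := hr₁ (j+1) le_rfl
  have h1' : 0 < S₁.esymm (j-1) := by rw [he₁]; positivity
  have h2' : S₁.esymm j = 0 := by rw [he₂, h2, mul_zero]
  have h3' : 0 < S₁.esymm (j+1) := by rw [he₃]; positivity
  have hprod : 0 < S₁.prod := by
    rw [← mesymm_card, hc₁]; exact h3'
  have h0 : (0:ℝ) ∉ S₁ := fun h => by
    rw [Multiset.prod_eq_zero h] at hprod; exact lt_irrefl _ hprod
  have key := mesymm_inv S₁ h0
  set S₂ := S₁.map (fun x => x⁻¹) with hS₂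
  have hc₂ : Multiset.card S₂ = j + 1 := by rw [hS₂, Multiset.card_map, hc₁]
  have k1 : S₂.esymm 1 = 0 := by
    have := key 1 (by omega)
    rw [hc₁] at this
    have hs : j + 1 - 1 = j := by omega
    rw [hs, h2'] at this
    exact (mul_eq_zero.mp this).resolve_right (ne_of_gt hprod)
  have k2 : 0 < S₂.esymm 2 := by
    have := key 2 (by omega)
    rw [hc₁] at this
    have hs : j + 1 - 2 = j - 1 := by omega
    rw [hs] at this
    have : S₂.esymm 2 = S₁.esymm (j-1) / S₁.prod := by
      field_simp
      linarith [this]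
    rw [this]
    positivity
  obtain ⟨S₃, hc₃, hr₃'⟩ := reduce 2 (j - 1) S₂ (by omega)
  obtain ⟨u, hu, heu⟩ := hr₃' 1 (by omega)
  obtain ⟨v, hv, hev⟩ := hr₃' 2 le_rfl
  have k1' : S₃.esymm 1 = 0 := by rw [heu, k1, mul_zero]
  have k2' : 0 < S₃.esymm 2 := by rw [hev]; positivity
  obtain ⟨x, y, hxy⟩ := Multiset.card_eq_two.mp hc₃
  subst hxy
  have e1 : ({x, y} : Multiset ℝ).esymm 1 = x + y := by
    show (x ::ₘ y ::ₘ 0).esymm 1 = x + y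
    rw [show (1:ℕ) = 0 + 1 from rfl, mesymm_cons, mesymm_cons, mesymm_zero,
      mesymm_eq_zero 0 1 (by simp), mesymm_zero]
    ring
  have e2 : ({x, y} : Multiset ℝ).esymm 2 = x * y := by
    show (x ::ₘ y ::ₘ 0).esymm 2 = x * y
    rw [show (2:ℕ) = 1 + 1 from rfl, mesymm_cons, mesymm_cons, mesymm_cons, mesymm_zero,
      mesymm_eq_zero 0 1 (by simp), mesymm_eq_zero 0 2 (by simp)]
    ring
  rw [e1] at k1'
  rw [e2] at k2'
  nlinarith [k1', k2', sq_nonneg x, sq_nonneg y, sq_nonneg (x+y)]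



lemma mesymm_shift (t : ℝ) : ∀ (S : Multiset ℝ) (l : ℕ),
    (S.map fun x => x + t).esymm l =
      ∑ j ∈ Finset.range (l+1),
        ((Multiset.card S - j).choose (l - j) : ℝ) * t^(l-j) * S.esymm j := by
  intro S
  induction S using Multiset.induction_on with
  | empty =>
    intro l
    rw [Finset.sum_range_succ]
    have hz : ∀ j ∈ Finset.range l,
        ((Multiset.card (0 : Multiset ℝ) - j).choose (l - j) : ℝ) * t^(l-j) *
          (0 : Multiset ℝ).esymm j = 0 := by
      intro j hj
      rw [Finset.mem_range] at hj
      rw [Multiset.card_zero, Nat.zero_sub, Nat.choose_eq_zero_of_lt (by omega)]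
      push_cast; ring
    rw [Finset.sum_congr rfl hz, Finset.sum_const, smul_zero]
    simp
  | cons a S ih =>
    intro l
    cases l with
    | zero => simp [mesymm_zero]
    | succ l =>
      rw [Multiset.map_cons, mesymm_cons, ih (l+1), ih l, Multiset.card_cons]
      rw [Finset.sum_range_succ' _ (l+1)]
      conv_rhs => rw [Finset.sum_range_succ' _ (l+1)]
      simp only [Nat.succ_sub_succ_eq_sub, Nat.sub_zero, mesymm_zero, mesymm_cons]
      set M := Multiset.card S with hM
      have hB : ∑ k ∈ Finset.range (l+1),
            ((M - k).choose (l - k) : ℝ) * t^(l-k) * (S.esymm (k+1) + a * S.esymm k)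
          = (∑ k ∈ Finset.range (l+1), ((M - k).choose (l - k) : ℝ) * t^(l-k) * S.esymm (k+1))
            + ∑ k ∈ Finset.range (l+1), a * (((M - k).choose (l - k) : ℝ) * t^(l-k) * S.esymm k) := by
        rw [← Finset.sum_add_distrib]
        exact Finset.sum_congr rfl fun k _ => by ring
      have htS : (a + t) * ∑ k ∈ Finset.range (l+1), ((M - k).choose (l - k) : ℝ) * t^(l-k) * S.esymm k
          = (∑ k ∈ Finset.range (l+1), a * (((M - k).choose (l - k) : ℝ) * t^(l-k) * S.esymm k))
            + ∑ k ∈ Finset.range (l+1), ((M - k).choose (l - k) : ℝ) * t^(l+1-k) * S.esymm k := by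
        rw [add_mul, Finset.mul_sum, Finset.mul_sum]
        congr 1
        refine Finset.sum_congr rfl fun k hk => ?_
        rw [Finset.mem_range] at hk
        have hp : t^(l+1-k) = t * t^(l-k) := by
          rw [← pow_succ']
          congr 1
          omega
        rw [hp]; ring
      have htS2 : ∑ k ∈ Finset.range (l+1), ((M - k).choose (l - k) : ℝ) * t^(l+1-k) * S.esymm k
          = (∑ k ∈ Finset.range l, ((M - (k+1)).choose (l - (k+1)) : ℝ) * t^(l+1-(k+1)) * S.esymm (k+1))
            + ((M - 0).choose (l - 0) : ℝ) * t^(l+1-0) * S.esymm 0 :=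
        Finset.sum_range_succ' _ l
      have hstar : (∑ k ∈ Finset.range (l+1), ((M - (k+1)).choose (l+1 - (k+1)) : ℝ)
              * t^(l+1-(k+1)) * S.esymm (k+1))
            + ∑ k ∈ Finset.range l, ((M - (k+1)).choose (l - (k+1)) : ℝ) * t^(l+1-(k+1)) * S.esymm (k+1)
          = ∑ k ∈ Finset.range (l+1), ((M - k).choose (l - k) : ℝ) * t^(l-k) * S.esymm (k+1) := by
        simp only [Nat.succ_sub_succ_eq_sub]
        rw [Finset.sum_range_succ, Finset.sum_range_succ
          (fun k => ((M - k).choose (l - k) : ℝ) * t^(l-k) * S.esymm (k+1))]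
        have hlast : ((M - (l+1)).choose (l - l) : ℝ) * t^(l-l) * S.esymm (l+1)
            = ((M - l).choose (l - l) : ℝ) * t^(l-l) * S.esymm (l+1) := by
          by_cases hMl : l + 1 ≤ M
          · rw [Nat.sub_self]
            norm_num [Nat.choose_zero_right]
          · have : S.esymm (l+1) = 0 := mesymm_eq_zero S (l+1) (by omega)
            rw [this]; ring
        rw [hlast]
        have hsum : (∑ x ∈ Finset.range l, ((M - (x+1)).choose (l - x) : ℝ) * t^(l-x) * S.esymm (x+1))
            + ∑ x ∈ Finset.range l, ((M - (x+1)).choose (l - (x+1)) : ℝ) * t^(l-x) * S.esymm (x+1)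
            = ∑ x ∈ Finset.range l, ((M - x).choose (l - x) : ℝ) * t^(l-x) * S.esymm (x+1) := by
          rw [← Finset.sum_add_distrib]
          refine Finset.sum_congr rfl fun k hk => ?_
          rw [Finset.mem_range] at hk
          by_cases hkM : k + 1 ≤ M
          · have h1 : M - k = (M - (k+1)) + 1 := by omega
            have h2 : l - k = (l - (k+1)) + 1 := by omega
            rw [h1, h2, Nat.choose_succ_succ]
            push_cast
            ring
          · have hek : S.esymm (k+1) = 0 := mesymm_eq_zero S (k+1) (by omega)
            rw [hek]
            ring
        linarith [hsum]
      have hpascal : ((M + 1 - 0).choose (l+1-0) : ℝ) * t^(l+1) * 1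
          = ((M - 0).choose (l+1-0) : ℝ) * t^(l+1) * 1 + ((M - 0).choose (l - 0) : ℝ) * t^(l+1) * 1 := by
        simp only [Nat.sub_zero]
        rw [Nat.choose_succ_succ']
        push_cast
        ring
      have he0 : S.esymm 0 = 1 := mesymm_zero S
      simp only [Nat.succ_sub_succ_eq_sub, Nat.sub_zero] at htS2 hpascal hstar hB htS ⊢
      rw [he0] at htS2
      linarith [hB, htS, htS2, hstar, hpascal]



set_option linter.unusedSectionVars false

variable {ι : Type*} [DecidableEq ι]

noncomputable def E (κ : ι → ℝ) (s : Finset ι) (k : ℕ) : ℝ :=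
  ∑ u ∈ s.powersetCard k, ∏ j ∈ u, κ j

lemma E_eq_mesymm (κ : ι → ℝ) (s : Finset ι) (k : ℕ) :
    E κ s k = (s.1.map κ).esymm k :=
  (Finset.esymm_map_val κ s k).symm

lemma E_zero (κ : ι → ℝ) (s : Finset ι) : E κ s 0 = 1 := by
  simp [E]

lemma E_eq_zero (κ : ι → ℝ) {s : Finset ι} {k : ℕ} (h : s.card < k) : E κ s k = 0 := by
  rw [E, Finset.powersetCard_eq_empty.mpr h, Finset.sum_empty]

lemma E_one (κ : ι → ℝ) (s : Finset ι) : E κ s 1 = ∑ i ∈ s, κ i := by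
  rw [E, Finset.powersetCard_one, Finset.sum_map]
  simp

lemma E_erase (κ : ι → ℝ) {s : Finset ι} {i : ι} (hi : i ∈ s) (k : ℕ) :
    E κ s (k+1) = E κ (s.erase i) (k+1) + κ i * E κ (s.erase i) k := by
  rw [E_eq_mesymm, E_eq_mesymm, E_eq_mesymm]
  have hv : s.1 = i ::ₘ (s.erase i).1 := by
    rw [Finset.erase_val]
    exact (Multiset.cons_erase (Finset.mem_val.mpr hi)).symm
  rw [hv, Multiset.map_cons, mesymm_cons]

lemma E_shift (κ : ι → ℝ) (s : Finset ι) (t : ℝ) (l : ℕ) :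
    E (fun j => κ j + t) s l = ∑ j ∈ Finset.range (l+1),
        ((s.card - j).choose (l - j) : ℝ) * t^(l-j) * E κ s j := by
  rw [E_eq_mesymm]
  have hmm : (s.1.map fun j => κ j + t) = (s.1.map κ).map (fun x => x + t) := by
    rw [Multiset.map_map]
    rfl
  rw [hmm, mesymm_shift]
  simp only [Multiset.card_map, ← Finset.card_def]
  exact Finset.sum_congr rfl fun j _ => by rw [E_eq_mesymm]

lemma Gamma_shift {κ : ι → ℝ} {s : Finset ι} {K : ℕ}
    (hΓ : ∀ l, 1 ≤ l → l ≤ K → 0 < E κ s l) {t : ℝ} (ht : 0 ≤ t) :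
    ∀ l, 1 ≤ l → l ≤ K → 0 < E (fun j => κ j + t) s l := by
  intro l h1 h2
  rw [E_shift, Finset.sum_range_succ]
  have hlast : ((s.card - l).choose (l - l) : ℝ) * t^(l-l) * E κ s l = E κ s l := by
    rw [Nat.sub_self, Nat.choose_zero_right, pow_zero]
    push_cast
    ring
  rw [hlast]
  have hrest : 0 ≤ ∑ j ∈ Finset.range l,
      ((s.card - j).choose (l - j) : ℝ) * t^(l-j) * E κ s j := by
    apply Finset.sum_nonneg
    intro j hj
    rw [Finset.mem_range] at hj
    have hE : 0 ≤ E κ s j := by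
      rcases Nat.eq_zero_or_pos j with h | h
      · subst h; rw [E_zero]; norm_num
      · exact le_of_lt (hΓ j h (by omega))
    positivity
  linarith [hΓ l h1 h2]

lemma exists_large (κ : ι → ℝ) (s : Finset ι) (l : ℕ) (hl : 1 ≤ l) (hcard : l ≤ s.card) :
    ∃ T : ℝ, 0 ≤ T ∧ 0 < E (fun j => κ j + T) s l := by
  set B : ℝ := ∑ j ∈ Finset.range l,
    |((s.card - (j+1)).choose (l - (j+1)) : ℝ) * E κ s (j+1)| with hB
  have hBnn : 0 ≤ B := Finset.sum_nonneg fun j _ => abs_nonneg _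
  set T : ℝ := B + 1 with hT
  have hT1 : (1:ℝ) ≤ T := by linarith
  have hTpos : (0:ℝ) < T := by linarith
  refine ⟨T, by linarith, ?_⟩
  rw [E_shift, Finset.sum_range_succ' _ l]
  have h0term : T^l ≤ ((s.card - 0).choose (l - 0) : ℝ) * T^(l-0) * E κ s 0 := by
    rw [E_zero, Nat.sub_zero, Nat.sub_zero, mul_one]
    have hch : (1:ℝ) ≤ ((s.card).choose l : ℝ) := by
      exact_mod_cast Nat.choose_pos hcard
    nlinarith [pow_pos hTpos l]
  have hterm : ∀ j ∈ Finset.range l,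
      -(|((s.card - (j+1)).choose (l - (j+1)) : ℝ) * E κ s (j+1)| * T^(l-1))
        ≤ ((s.card - (j+1)).choose (l - (j+1)) : ℝ) * T^(l-(j+1)) * E κ s (j+1) := by
    intro j hj
    rw [Finset.mem_range] at hj
    set a : ℝ := ((s.card - (j+1)).choose (l - (j+1)) : ℝ) * E κ s (j+1) with ha
    have h1 : ((s.card - (j+1)).choose (l - (j+1)) : ℝ) * T^(l-(j+1)) * E κ s (j+1)
        = a * T^(l-(j+1)) := by rw [ha]; ring
    rw [h1]
    have hple : T^(l-(j+1)) ≤ T^(l-1) := pow_le_pow_right₀ hT1 (by omega)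
    have hpp : (0:ℝ) < T^(l-(j+1)) := pow_pos hTpos _
    rcases le_or_gt 0 a with hc | hc
    · nlinarith [abs_nonneg a, pow_pos hTpos (l-1)]
    · have : a * T^(l-1) ≤ a * T^(l-(j+1)) := by nlinarith
      have habs : |a| = -a := abs_of_neg hc
      nlinarith
  have hsum : -(B * T^(l-1)) ≤ ∑ j ∈ Finset.range l,
      ((s.card - (j+1)).choose (l - (j+1)) : ℝ) * T^(l-(j+1)) * E κ s (j+1) := by
    have := Finset.sum_le_sum hterm
    calc -(B * T^(l-1))
        = ∑ j ∈ Finset.range l,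
          -(|((s.card - (j+1)).choose (l - (j+1)) : ℝ) * E κ s (j+1)| * T^(l-1)) := by
          rw [hB, Finset.sum_mul, ← Finset.sum_neg_distrib]
      _ ≤ _ := this
  have hTl : T^l = T^(l-1) * T := by
    conv_lhs => rw [show l = (l-1)+1 by omega]
    rw [pow_succ]
  have hfin : (0:ℝ) < T^(l-1) := pow_pos hTpos _
  nlinarith [hsum, h0term]





lemma lemA : ∀ (k : ℕ) (κ : ι → ℝ) (s : Finset ι), k + 1 ≤ s.card →
    (∀ l, 1 ≤ l → l ≤ k + 1 → 0 < E κ s l) → ∀ i ∈ s, 0 < E κ (s.erase i) k := by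
  intro k
  induction k with
  | zero =>
    intro κ s _ _ i _
    rw [E_zero]
    norm_num
  | succ k ih =>
    intro κ s hcard hΓ i hi
    by_contra hle
    push_neg at hle
    have hcard' : k + 1 ≤ (s.erase i).card := by
      rw [Finset.card_erase_of_mem hi]
      omega
    obtain ⟨T, hT0, hTpos⟩ := exists_large κ (s.erase i) (k+1) (by omega) hcard'
    have hcont : Continuous (fun t : ℝ => E (fun j => κ j + t) (s.erase i) (k+1)) := by
      unfold E
      apply continuous_finset_sum
      intro u _
      apply continuous_finset_prod
      intro j _
      exact continuous_const.add continuous_id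
    have hf0 : E (fun j => κ j + 0) (s.erase i) (k+1) ≤ 0 := by
      have : (fun j => κ j + 0) = κ := by funext j; ring
      rw [this]
      exact hle
    have hIcc : (0:ℝ) ∈ Set.Icc (E (fun j => κ j + 0) (s.erase i) (k+1))
        (E (fun j => κ j + T) (s.erase i) (k+1)) := ⟨hf0, le_of_lt hTpos⟩
    obtain ⟨t₀, ht₀mem, ht₀⟩ := intermediate_value_Icc hT0 hcont.continuousOn hIcc
    have ht₀0 : 0 ≤ t₀ := ht₀mem.1
    set ν : ι → ℝ := fun j => κ j + t₀ with hν
    have hνΓ : ∀ l, 1 ≤ l → l ≤ k + 2 → 0 < E ν s l := Gamma_shift hΓ ht₀0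
    have hcontact : E ν (s.erase i) (k+1) = 0 := ht₀
    have htop : 0 < E ν (s.erase i) (k+2) := by
      have hdec := E_erase ν hi (k+1)
      rw [hcontact, mul_zero, add_zero] at hdec
      rw [← hdec]
      exact hνΓ (k+2) (by omega) le_rfl
    have hbot : 0 < E ν (s.erase i) k :=
      ih ν s (by omega) (fun l h1 h2 => hνΓ l h1 (by omega)) i hi
    refine weak_newton ((s.erase i).1.map ν) (k+1) (by omega) ?_ ?_ ?_
    · rw [Nat.add_sub_cancel, ← E_eq_mesymm]
      exact hbot
    · rw [← E_eq_mesymm]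
      exact hcontact
    · rw [← E_eq_mesymm]
      exact htop




lemma sum_kappa_erase (κ : ι → ℝ) (s : Finset ι) (k : ℕ) :
    ∑ i ∈ s, κ i * E κ (s.erase i) k = ((k:ℝ)+1) * E κ s (k+1) := by
  have lhs : ∑ i ∈ s, κ i * E κ (s.erase i) k
      = ∑ p ∈ s.sigma (fun i => (s.erase i).powersetCard k), ∏ j ∈ insert p.1 p.2, κ j := by
    rw [Finset.sum_sigma]
    refine Finset.sum_congr rfl fun i _ => ?_
    rw [E, Finset.mul_sum]
    refine Finset.sum_congr rfl fun u hu => ?_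
    rw [Finset.mem_powersetCard] at hu
    have hiu : i ∉ u := fun h => (Finset.notMem_erase i s) (hu.1 h)
    rw [Finset.prod_insert hiu]
  have rhs : ((k:ℝ)+1) * E κ s (k+1)
      = ∑ p ∈ (s.powersetCard (k+1)).sigma (fun u => u), ∏ j ∈ p.1, κ j := by
    rw [Finset.sum_sigma, E, Finset.mul_sum]
    refine Finset.sum_congr rfl fun u hu => ?_
    rw [Finset.mem_powersetCard] at hu
    have hconst : (∑ x ∈ u, ∏ j ∈ (⟨u, x⟩ : (_ : Finset ι) × ι).fst, κ j)
        = ∑ _x ∈ u, ∏ j ∈ u, κ j := rfl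
    rw [hconst, Finset.sum_const, hu.2, nsmul_eq_mul]
    push_cast
    ring
  rw [lhs, rhs]
  refine Finset.sum_nbij' (fun p => ⟨insert p.1 p.2, p.1⟩) (fun q => ⟨q.2, q.1.erase q.2⟩)
    ?_ ?_ ?_ ?_ ?_
  · intro p hp
    rw [Finset.mem_sigma] at hp ⊢
    obtain ⟨hps, hpu⟩ := hp
    rw [Finset.mem_powersetCard] at hpu
    have hiu : p.1 ∉ p.2 := fun h => (Finset.notMem_erase p.1 s) (hpu.1 h)
    refine ⟨Finset.mem_powersetCard.mpr ⟨?_, ?_⟩, Finset.mem_insert_self _ _⟩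
    · exact Finset.insert_subset hps (hpu.1.trans (Finset.erase_subset _ _))
    · rw [Finset.card_insert_of_notMem hiu, hpu.2]
  · intro q hq
    rw [Finset.mem_sigma] at hq ⊢
    obtain ⟨hqu, hqi⟩ := hq
    rw [Finset.mem_powersetCard] at hqu
    refine ⟨hqu.1 hqi, Finset.mem_powersetCard.mpr ⟨?_, ?_⟩⟩
    · exact Finset.erase_subset_erase _ hqu.1
    · rw [Finset.card_erase_of_mem hqi, hqu.2]
      omega
  · intro p hp
    rw [Finset.mem_sigma] at hp
    obtain ⟨_, hpu⟩ := hp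
    rw [Finset.mem_powersetCard] at hpu
    have hiu : p.1 ∉ p.2 := fun h => (Finset.notMem_erase p.1 s) (hpu.1 h)
    simp [Finset.erase_insert hiu]
  · intro q hq
    rw [Finset.mem_sigma] at hq
    simp [Finset.insert_erase hq.2]
  · intro p _
    rfl

lemma sum_erase_eq (κ : ι → ℝ) (s : Finset ι) (k : ℕ) (hk : k ≤ s.card) :
    ∑ i ∈ s, E κ (s.erase i) k = ((s.card : ℝ) - k) * E κ s k := by
  have lhs : ∑ i ∈ s, E κ (s.erase i) k
      = ∑ p ∈ s.sigma (fun i => (s.erase i).powersetCard k), ∏ j ∈ p.2, κ j := by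
    rw [Finset.sum_sigma]
    rfl
  have rhs : ((s.card:ℝ) - k) * E κ s k
      = ∑ p ∈ (s.powersetCard k).sigma (fun u => s \ u), ∏ j ∈ p.1, κ j := by
    rw [Finset.sum_sigma, E, Finset.mul_sum]
    refine Finset.sum_congr rfl fun u hu => ?_
    rw [Finset.mem_powersetCard] at hu
    have hconst : (∑ x ∈ s \ u, ∏ j ∈ (⟨u, x⟩ : (_ : Finset ι) × ι).fst, κ j)
        = ∑ _x ∈ s \ u, ∏ j ∈ u, κ j := rfl
    rw [hconst, Finset.sum_const, Finset.card_sdiff_of_subset hu.1, hu.2, nsmul_eq_mul]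
    rw [Nat.cast_sub hk]
  rw [lhs, rhs]
  refine Finset.sum_nbij' (fun p => ⟨p.2, p.1⟩) (fun q => ⟨q.2, q.1⟩) ?_ ?_ ?_ ?_ ?_
  · intro p hp
    rw [Finset.mem_sigma] at hp ⊢
    obtain ⟨hps, hpu⟩ := hp
    rw [Finset.mem_powersetCard] at hpu
    refine ⟨Finset.mem_powersetCard.mpr ⟨hpu.1.trans (Finset.erase_subset _ _), hpu.2⟩, ?_⟩
    rw [Finset.mem_sdiff]
    exact ⟨hps, fun h => (Finset.notMem_erase p.1 s) (hpu.1 h)⟩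
  · intro q hq
    rw [Finset.mem_sigma] at hq ⊢
    obtain ⟨hqu, hqi⟩ := hq
    rw [Finset.mem_powersetCard] at hqu
    rw [Finset.mem_sdiff] at hqi
    refine ⟨hqi.1, Finset.mem_powersetCard.mpr ⟨?_, hqu.2⟩⟩
    exact (Finset.subset_erase).mpr ⟨hqu.1, hqi.2⟩
  · intro p _; rfl
  · intro q _; rfl
  · intro p _; rfl

end MyEsymmAux

/-- The `k`-th elementary symmetric function of `κ ∈ ℝⁿ`. -/
noncomputable def esymm (n k : ℕ) (κ : Fin n → ℝ) : ℝ :=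
  ∑ s ∈ (Finset.univ : Finset (Fin n)).powersetCard k, ∏ j ∈ s, κ j

/-- `σ_{k,i}(κ)`: the sum of the terms of `σ_k(κ)` not containing the factor `κ i`. -/
noncomputable def esymmRem (n k : ℕ) (i : Fin n) (κ : Fin n → ℝ) : ℝ :=
  ∑ s ∈ ((Finset.univ : Finset (Fin n)).erase i).powersetCard k, ∏ j ∈ s, κ j

/-- If `κ₁ ≥ κ₂ ≥ … ≥ κ_n` and `κ ∈ Γ_m⁺` (that is, `σ_l(κ) > 0` for all `1 ≤ l ≤ m`),
then for `1 ≤ m ≤ n`: `κ₁·σ_{m-1,1}(κ) ≥ (m/n)·σ_m(κ)`. -/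
theorem esymm_top_index_bound (n m : ℕ) (hm : 1 ≤ m) (hmn : m ≤ n)
    (κ : Fin n → ℝ)
    (hsort : ∀ i j : Fin n, i ≤ j → κ j ≤ κ i)
    (hΓ : ∀ l : ℕ, 1 ≤ l → l ≤ m → 0 < esymm n l κ) :
    ((m : ℝ) / (n : ℝ)) * esymm n m κ ≤
      κ ⟨0, by omega⟩ * esymmRem n (m - 1) ⟨0, by omega⟩ κ := by
  open MyEsymmAux in
  have hn : 0 < n := by omega
  set i0 : Fin n := ⟨0, by omega⟩ with hi0
  show ((m : ℝ) / (n : ℝ)) * esymm n m κ ≤ κ i0 * esymmRem n (m - 1) i0 κ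
  have hesymm : ∀ l, esymm n l κ = E κ Finset.univ l := fun l => rfl
  have hrem : ∀ l, esymmRem n l i0 κ = E κ (Finset.univ.erase i0) l := fun l => rfl
  set s0 := (Finset.univ : Finset (Fin n)).erase i0 with hs0
  have hcard_univ : (Finset.univ : Finset (Fin n)).card = n := by simp
  have hcard0 : s0.card = n - 1 := by
    rw [hs0, Finset.card_erase_of_mem (Finset.mem_univ _), hcard_univ]
  have hΓE : ∀ l, 1 ≤ l → l ≤ m → 0 < E κ Finset.univ l := by
    intro l h1 h2
    rw [← hesymm]
    exact hΓ l h1 h2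
  have hmax : ∀ j : Fin n, κ j ≤ κ i0 := by
    intro j
    apply hsort i0 j
    simp [hi0, Fin.le_def]
  have hk0 : 0 < κ i0 := by
    have h1 := hΓE 1 le_rfl hm
    rw [E_one] at h1
    have h2 : ∑ j : Fin n, κ j ≤ ∑ _j : Fin n, κ i0 :=
      Finset.sum_le_sum (fun j _ => hmax j)
    rw [Finset.sum_const, hcard_univ, nsmul_eq_mul] at h2
    by_contra hc
    push_neg at hc
    have : (n:ℝ) * κ i0 ≤ 0 := mul_nonpos_of_nonneg_of_nonpos (by positivity) hc
    linarith
  have hAm1 : 0 < E κ s0 (m-1) := by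
    apply lemA (m-1) κ Finset.univ (by omega)
      (fun l h1 h2 => hΓE l h1 (by omega)) i0 (Finset.mem_univ _)
  have hdec : E κ Finset.univ m = E κ s0 m + κ i0 * E κ s0 (m-1) := by
    have h := E_erase κ (Finset.mem_univ i0) (m-1)
    rw [show m - 1 + 1 = m by omega] at h
    exact h
  have hcore : (m:ℝ) * E κ s0 m ≤ ((n:ℝ) - m) * (κ i0 * E κ s0 (m-1)) := by
    rcases le_or_gt (E κ s0 m) 0 with hAm | hAm
    · have h1 : (m:ℝ) * E κ s0 m ≤ 0 :=
        mul_nonpos_of_nonneg_of_nonpos (by positivity) hAm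
      have h2 : (0:ℝ) ≤ ((n:ℝ) - m) * (κ i0 * E κ s0 (m-1)) := by
        apply mul_nonneg
        · have : (m:ℝ) ≤ (n:ℝ) := by exact_mod_cast hmn
          linarith
        · positivity
      linarith
    · have hmn1 : m ≤ n - 1 := by
        by_contra h
        have hlt : s0.card < m := by omega
        exact absurd (E_eq_zero κ hlt) (ne_of_gt hAm)
      have hΓ0 : ∀ l, 1 ≤ l → l ≤ m → 0 < E κ s0 l := by
        intro l h1 h2
        rcases eq_or_lt_of_le h2 with he | hlt
        · subst he; exact hAm
        · exact lemA l κ Finset.univ (by omega)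
            (fun l' h1' h2' => hΓE l' h1' (by omega)) i0 (Finset.mem_univ _)
      have hid : ∑ i ∈ s0, κ i * E κ (s0.erase i) (m-1) = (m:ℝ) * E κ s0 m := by
        have h := sum_kappa_erase κ s0 (m-1)
        rw [show m - 1 + 1 = m by omega] at h
        rw [h]
        congr 1
        have : ((m - 1 : ℕ) : ℝ) = (m : ℝ) - 1 := by
          rw [Nat.cast_sub hm]
          norm_num
        rw [this]
        ring
      have hbound : ∀ i ∈ s0, κ i * E κ (s0.erase i) (m-1) ≤ κ i0 * E κ (s0.erase i) (m-1) := by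
        intro i hi
        have hpos : 0 < E κ (s0.erase i) (m-1) := by
          apply lemA (m-1) κ s0 (by omega)
            (fun l' h1' h2' => hΓ0 l' h1' (by omega)) i hi
        exact mul_le_mul_of_nonneg_right (hmax i) (le_of_lt hpos)
      have hsum2 : ∑ i ∈ s0, E κ (s0.erase i) (m-1)
          = ((s0.card : ℝ) - (m-1 : ℕ)) * E κ s0 (m-1) :=
        sum_erase_eq κ s0 (m-1) (by omega)
      have hcast : ((s0.card : ℝ) - ((m-1 : ℕ) : ℝ)) = (n:ℝ) - m := by
        rw [hcard0, Nat.cast_sub (by omega : 1 ≤ n), Nat.cast_sub hm]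
        norm_num
      calc (m:ℝ) * E κ s0 m = ∑ i ∈ s0, κ i * E κ (s0.erase i) (m-1) := hid.symm
        _ ≤ ∑ i ∈ s0, κ i0 * E κ (s0.erase i) (m-1) := Finset.sum_le_sum hbound
        _ = κ i0 * ∑ i ∈ s0, E κ (s0.erase i) (m-1) := by rw [Finset.mul_sum]
        _ = κ i0 * (((s0.card : ℝ) - (m-1 : ℕ)) * E κ s0 (m-1)) := by rw [hsum2]
        _ = ((n:ℝ) - m) * (κ i0 * E κ s0 (m-1)) := by rw [hcast]; ring
  rw [hesymm, hrem, hdec, div_mul_eq_mul_div, div_le_iff₀ (by exact_mod_cast hn : (0:ℝ) < (n:ℝ))]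
  nlinarith [hcore, hk0, hAm1]
end

section
/- Let p_k(κ) = σ_k(κ)/C(n,k) denote the normalized elementary symmetric functions. If κ ∈ Γ_m⁺, then p₁(κ) ≥ p₂(κ)^{1/2} ≥ ... ≥ p_m(κ)^{1/m} (MacLaurin's inequality chain). -/
/-- The normalized elementary symmetric function `p_k = σ_k / C(n,k)`. -/
noncomputable def pnorm (n k : ℕ) (κ : Fin n → ℝ) : ℝ :=
  esymm n k κ / (Nat.choose n k : ℝ)

lemma esymm_eq_multiset (n k : ℕ) (κ : Fin n → ℝ) :
    esymm n k κ = (Finset.univ.val.map κ).esymm k := by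
  rw [Finset.esymm_map_val]; rfl

lemma esymm_zero' (n : ℕ) (κ : Fin n → ℝ) : esymm n 0 κ = 1 := by
  simp [esymm]

lemma pnorm_zero (n : ℕ) (κ : Fin n → ℝ) : pnorm n 0 κ = 1 := by
  simp [pnorm, esymm_zero']

lemma sum_powersetCard_compl {n k : ℕ} (hk : k ≤ n) (g : Finset (Fin n) → ℝ) :
    ∑ s ∈ (Finset.univ : Finset (Fin n)).powersetCard k, g sᶜ
      = ∑ s ∈ (Finset.univ : Finset (Fin n)).powersetCard (n - k), g s := by
  refine Finset.sum_nbij' (fun s => sᶜ) (fun s => sᶜ) ?_ ?_ ?_ ?_ ?_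
  · intro s hs
    rw [Finset.mem_powersetCard_univ] at hs ⊢
    rw [Finset.card_compl, hs, Fintype.card_fin]
  · intro s hs
    rw [Finset.mem_powersetCard_univ] at hs ⊢
    have hc := Finset.card_le_card (Finset.subset_univ s)
    rw [Finset.card_univ, Fintype.card_fin] at hc
    rw [Finset.card_compl, hs, Fintype.card_fin]
    omega
  · intro s _; simp
  · intro s _; simp
  · intro s _; rfl

open Finset in
lemma two_mul_sum_pc2 {ι : Type*} [DecidableEq ι] (s : Finset ι) (a : ι → ℝ) :
    2 * ∑ t ∈ s.powersetCard 2, ∏ i ∈ t, a i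
      = (∑ i ∈ s, a i) ^ 2 - ∑ i ∈ s, (a i) ^ 2 := by
  induction s using Finset.cons_induction with
  | empty =>
    rw [Finset.powersetCard_eq_empty.2 (by simp)]
    simp
  | cons x s hx ih =>
    rw [Finset.cons_eq_insert]
    rw [show (2 : ℕ) = Nat.succ 1 from rfl, powersetCard_succ_insert hx]
    rw [Finset.sum_union ?disj]
    case disj =>
      rw [Finset.disjoint_right]
      intro t ht hts
      simp only [Finset.mem_image] at ht
      obtain ⟨u, hu, rfl⟩ := ht
      have hxu : x ∉ u := fun hxu => hx ((Finset.mem_powersetCard.1 hu).1 hxu)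
      have : x ∈ (insert x u : Finset ι) := Finset.mem_insert_self x u
      have hts' := (Finset.mem_powersetCard.1 hts).1 this
      exact hx hts'
    rw [Finset.sum_image ?inj]
    case inj =>
      intro t ht u hu htu
      have hxt : x ∉ t := fun h => hx ((Finset.mem_powersetCard.1 ht).1 h)
      have hxu : x ∉ u := fun h => hx ((Finset.mem_powersetCard.1 hu).1 h)
      rw [← Finset.erase_insert hxt, htu, Finset.erase_insert hxu]
    have h1 : ∀ t ∈ s.powersetCard 1, ∏ i ∈ insert x t, a i = a x * ∏ i ∈ t, a i := by
      intro t ht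
      have hxt : x ∉ t := fun h => hx ((Finset.mem_powersetCard.1 ht).1 h)
      rw [Finset.prod_insert hxt]
    rw [Finset.sum_congr rfl h1, ← Finset.mul_sum]
    have h2 : ∑ t ∈ s.powersetCard 1, ∏ i ∈ t, a i = ∑ i ∈ s, a i := by
      rw [powersetCard_one, Finset.sum_map]
      simp
    rw [h2, Finset.sum_insert hx, Finset.sum_insert hx]
    ring_nf
    ring_nf at ih
    linarith [ih]

open Finset in
lemma esymm_pred (n : ℕ) (hn : 1 ≤ n) (κ : Fin n → ℝ) :
    esymm n (n - 1) κ = ∑ i : Fin n, ∏ j ∈ ({i} : Finset (Fin n))ᶜ, κ j := by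
  have := sum_powersetCard_compl (n := n) (k := 1) hn (fun s => ∏ j ∈ s, κ j)
  rw [esymm, ← this, powersetCard_one, Finset.sum_map]
  rfl

open Finset in
lemma esymm_top_mul (n : ℕ) (hn : 2 ≤ n) (κ : Fin n → ℝ) :
    esymm n n κ * esymm n (n - 2) κ
      = ∑ t ∈ (Finset.univ : Finset (Fin n)).powersetCard 2,
          ∏ i ∈ t, ∏ j ∈ ({i} : Finset (Fin n))ᶜ, κ j := by
  have hpc : (Finset.univ : Finset (Fin n)).powersetCard n = {Finset.univ} := by
    have := powersetCard_self (Finset.univ : Finset (Fin n))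
    rwa [Finset.card_univ, Fintype.card_fin] at this
  have htop : esymm n n κ = ∏ j : Fin n, κ j := by
    rw [esymm, hpc, Finset.sum_singleton]
  have hc := sum_powersetCard_compl (n := n) (k := 2) hn (fun s => ∏ j ∈ s, κ j)
  rw [htop, esymm, ← hc, Finset.mul_sum]
  refine Finset.sum_congr rfl fun t ht => ?_
  rw [Finset.mem_powersetCard_univ] at ht
  obtain ⟨i, j, hij, rfl⟩ := Finset.card_eq_two.1 ht
  rw [Finset.prod_pair hij]
  have e1 : ({i, j} : Finset (Fin n))ᶜ = (({i} : Finset (Fin n))ᶜ).erase j := by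
    rw [show ({i, j} : Finset (Fin n)) = insert j {i} from Finset.pair_comm i j, compl_insert]
  have hj : j ∈ ({i} : Finset (Fin n))ᶜ := by simp [hij.symm]
  have e2 : ∏ l ∈ ({i} : Finset (Fin n))ᶜ, κ l
      = κ j * ∏ l ∈ ({i, j} : Finset (Fin n))ᶜ, κ l := by
    rw [e1, Finset.mul_prod_erase _ _ hj]
  have e3 : ∏ l : Fin n, κ l = κ i * ∏ l ∈ ({i} : Finset (Fin n))ᶜ, κ l := by
    rw [compl_singleton, Finset.mul_prod_erase _ _ (Finset.mem_univ i)]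
  have e4 : ∏ l ∈ ({j} : Finset (Fin n))ᶜ, κ l
      = κ i * ∏ l ∈ ({i, j} : Finset (Fin n))ᶜ, κ l := by
    have e1' : ({i, j} : Finset (Fin n))ᶜ = (({j} : Finset (Fin n))ᶜ).erase i := by
      rw [show ({i, j} : Finset (Fin n)) = insert i {j} from rfl, compl_insert]
    have hi : i ∈ ({j} : Finset (Fin n))ᶜ := by simp [hij]
    rw [e1', Finset.mul_prod_erase _ _ hi]
  rw [e3, e2, e4]
  ring

open Finset in
lemma newton_top (n : ℕ) (hn : 2 ≤ n) (κ : Fin n → ℝ) :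
    pnorm n (n - 2) κ * pnorm n n κ ≤ pnorm n (n - 1) κ ^ 2 := by
  set a : Fin n → ℝ := fun i => ∏ j ∈ ({i} : Finset (Fin n))ᶜ, κ j with ha
  set S1 : ℝ := ∑ i : Fin n, a i with hS1def
  set S2 : ℝ := ∑ i : Fin n, (a i) ^ 2 with hS2def
  have hS1 : esymm n (n - 1) κ = S1 := esymm_pred n (by omega) κ
  have hσ : esymm n n κ * esymm n (n - 2) κ = (S1 ^ 2 - S2) / 2 := by
    rw [esymm_top_mul n hn κ]
    have h2 := two_mul_sum_pc2 (Finset.univ : Finset (Fin n)) a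
    linarith
  have hcs : S1 ^ 2 ≤ (n : ℝ) * S2 := by
    have := sq_sum_le_card_mul_sum_sq (s := (Finset.univ : Finset (Fin n))) (f := a)
    simpa [hS1def, hS2def] using this
  have hchoose2 : 2 * n.choose (n - 2) = n * (n - 1) := by
    have h1 : n.choose (n - 2) = n.choose 2 :=
      Nat.choose_symm_of_eq_add (by omega : n = (n - 2) + 2)
    have h2 := Nat.add_one_mul_choose_eq (n - 1) 1
    have hsucc : n - 1 + 1 = n := by omega
    rw [hsucc, Nat.choose_one_right, show 1 + 1 = 2 from rfl] at h2
    rw [h1]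
    omega
  have hc2 : 2 * ((n.choose (n - 2) : ℕ) : ℝ) = (n : ℝ) * ((n : ℝ) - 1) := by
    have := congrArg (fun m : ℕ => (m : ℝ)) hchoose2
    push_cast [Nat.cast_sub (by omega : 1 ≤ n)] at this
    linarith
  have hc1 : ((n.choose (n - 1) : ℕ) : ℝ) = (n : ℝ) := by
    rw [Nat.choose_symm_of_eq_add (by omega : n = (n - 1) + 1), Nat.choose_one_right]
  have hcn : ((n.choose n : ℕ) : ℝ) = 1 := by simp
  have hN : (2 : ℝ) ≤ (n : ℝ) := by exact_mod_cast hn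
  have hcpos : (0 : ℝ) < (n.choose (n - 2) : ℝ) := by nlinarith
  rw [pnorm, pnorm, pnorm, hS1, hcn, hc1]
  rw [div_one, div_pow, div_mul_eq_mul_div, div_le_div_iff₀ hcpos (by nlinarith)]
  have hσ' : esymm n (n - 2) κ * esymm n n κ = (S1 ^ 2 - S2) / 2 := by linarith [hσ]
  rw [hσ']
  nlinarith [hcs, hN, sq_nonneg S1]

open Polynomial in
lemma coeff_prod_tuple (n k : ℕ) (hk : k ≤ n) (κ : Fin n → ℝ) :
    ((Finset.univ.val.map κ).map fun r => X - C r).prod.coeff (n - k)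
      = (-1) ^ k * esymm n k κ := by
  have hcard : Multiset.card (Finset.univ.val.map κ) = n := by simp
  have h := Multiset.prod_X_sub_C_coeff (Finset.univ.val.map κ)
    (k := n - k) (by rw [hcard]; omega)
  rw [hcard, show n - (n - k) = k by omega] at h
  rw [h, esymm_eq_multiset]

lemma exists_tuple : ∀ (n : ℕ) (s : Multiset ℝ), Multiset.card s = n →
    ∃ κ : Fin n → ℝ, Finset.univ.val.map κ = s := by
  intro n
  induction n with
  | zero =>
    intro s hs
    exact ⟨fun _ => 0, by simp [Multiset.card_eq_zero.1 hs]⟩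
  | succ n ih =>
    intro s hs
    obtain ⟨x, hx⟩ : ∃ x, x ∈ s :=
      Multiset.exists_mem_of_ne_zero (by rintro rfl; simp at hs)
    have hsx : s = x ::ₘ s.erase x := (Multiset.cons_erase hx).symm
    have hcard' : Multiset.card (s.erase x) = n := by
      rw [Multiset.card_erase_of_mem hx, hs]
      rfl
    obtain ⟨κ, hκ⟩ := ih (s.erase x) hcard'
    refine ⟨Fin.cons x κ, ?_⟩
    rw [hsx, ← hκ, Fin.univ_succ, Finset.cons_val, Multiset.map_cons, Fin.cons_zero,
      Finset.map_val, Multiset.map_map]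
    simp [Function.comp_def]

open Polynomial in
lemma exists_deriv (n : ℕ) (κ : Fin (n + 1) → ℝ) :
    ∃ μ : Fin n → ℝ, ∀ k, k ≤ n →
      ((n : ℝ) + 1) * esymm n k μ = ((n + 1 - k : ℕ) : ℝ) * esymm (n + 1) k κ := by
  set s : Multiset ℝ := Finset.univ.val.map κ with hs
  have hcard : Multiset.card s = n + 1 := by simp [hs]
  set P : ℝ[X] := (s.map fun r => X - C r).prod with hP
  have hmonic : P.Monic := by
    apply monic_multiset_prod_of_monic
    intro a _
    exact monic_X_sub_C a
  have hdeg : P.natDegree = n + 1 := by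
    rw [hP, natDegree_multiset_prod_X_sub_C_eq_card, hcard]
  have hroots : P.roots = s := roots_multiset_prod_X_sub_C s
  have hlead : (derivative P).coeff n = (n : ℝ) + 1 := by
    rw [coeff_derivative]
    have : P.coeff (n + 1) = 1 := by
      have := hmonic.coeff_natDegree
      rwa [hdeg] at this
    rw [this, one_mul]
  have hne : derivative P ≠ 0 := by
    intro h
    rw [h, coeff_zero] at hlead
    have : (0:ℝ) < (n : ℝ) + 1 := by positivity
    linarith [hlead]
  have hdeg' : (derivative P).natDegree = n := by
    refine le_antisymm ?_ ?_
    · have := natDegree_derivative_le P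
      omega
    · refine le_natDegree_of_ne_zero ?_
      rw [hlead]
      positivity
  have hcroots : Multiset.card (derivative P).roots = n := by
    refine le_antisymm ?_ ?_
    · have := (derivative P).card_roots'
      omega
    · have h1 := P.card_roots_le_derivative
      rw [hroots, hcard] at h1
      omega
  obtain ⟨μ, hμ⟩ := exists_tuple n (derivative P).roots hcroots
  have hfact : Polynomial.C ((derivative P).leadingCoeff) *
      ((derivative P).roots.map fun a => X - C a).prod = derivative P :=
    C_leadingCoeff_mul_prod_multiset_X_sub_C (hcroots.trans hdeg'.symm)
  have hlc : (derivative P).leadingCoeff = (n : ℝ) + 1 := by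
    rw [Polynomial.leadingCoeff, hdeg', hlead]
  refine ⟨μ, fun k hk => ?_⟩
  have h1 : (derivative P).coeff (n - k) = ((n + 1 - k : ℕ) : ℝ) * ((-1) ^ k * esymm (n + 1) k κ) := by
    rw [coeff_derivative]
    have hnk : n - k + 1 = (n + 1) - k := by omega
    rw [hnk, coeff_prod_tuple (n + 1) k (by omega) κ]
    have : ((n - k : ℕ) : ℝ) + 1 = ((n + 1 - k : ℕ) : ℝ) := by
      push_cast [Nat.cast_sub hk, Nat.cast_sub (by omega : k ≤ n + 1)]
      ring
    rw [← this]
    ring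
  have h2 : (derivative P).coeff (n - k) = ((n : ℝ) + 1) * ((-1) ^ k * esymm n k μ) := by
    rw [← hfact, hlc, coeff_C_mul, ← hμ, coeff_prod_tuple n k hk μ]
  have h3 := h1.symm.trans h2
  have hsign : ((-1 : ℝ) ^ k) ≠ 0 := by
    intro h
    have := pow_ne_zero k (by norm_num : (-1 : ℝ) ≠ 0)
    exact this h
  have h4 : ((-1 : ℝ) ^ k) * (((n + 1 - k : ℕ) : ℝ) * esymm (n + 1) k κ)
      = ((-1 : ℝ) ^ k) * (((n : ℝ) + 1) * esymm n k μ) := by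
    linear_combination h3
  exact (mul_left_cancel₀ hsign h4).symm

lemma pnorm_deriv (n : ℕ) (κ : Fin (n + 1) → ℝ) :
    ∃ μ : Fin n → ℝ, ∀ k, k ≤ n → pnorm n k μ = pnorm (n + 1) k κ := by
  obtain ⟨μ, hμ⟩ := exists_deriv n κ
  refine ⟨μ, fun k hk => ?_⟩
  have h := hμ k hk
  have hnat : (n + 1 - k) * (n + 1).choose k = (n + 1) * n.choose k := by
    calc (n + 1 - k) * (n + 1).choose k = (n + 1).choose k * (n + 1 - k) := mul_comm _ _
      _ = (n + 1).choose (k + 1) * (k + 1) := (Nat.choose_succ_right_eq (n + 1) k).symm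
      _ = (n + 1) * n.choose k := (Nat.add_one_mul_choose_eq n k).symm
  have hpos1 : (0 : ℝ) < (n.choose k : ℝ) := by
    exact_mod_cast Nat.choose_pos hk
  have hpos2 : (0 : ℝ) < ((n + 1).choose k : ℝ) := by
    exact_mod_cast Nat.choose_pos (by omega : k ≤ n + 1)
  rw [pnorm, pnorm, div_eq_div_iff (by positivity) (by positivity)]
  have hnatR : ((n + 1 - k : ℕ) : ℝ) * ((n + 1).choose k : ℝ) = ((n : ℝ) + 1) * (n.choose k : ℝ) := by
    exact_mod_cast congrArg (fun m : ℕ => (m : ℝ)) hnat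
  have hne : ((n : ℝ) + 1) ≠ 0 := by positivity
  apply mul_left_cancel₀ hne
  calc ((n : ℝ) + 1) * (esymm n k μ * ((n + 1).choose k : ℝ))
      = (((n : ℝ) + 1) * esymm n k μ) * ((n + 1).choose k : ℝ) := by ring
    _ = (((n + 1 - k : ℕ) : ℝ) * esymm (n + 1) k κ) * ((n + 1).choose k : ℝ) := by rw [h]
    _ = esymm (n + 1) k κ * (((n + 1 - k : ℕ) : ℝ) * ((n + 1).choose k : ℝ)) := by ring
    _ = esymm (n + 1) k κ * (((n : ℝ) + 1) * (n.choose k : ℝ)) := by rw [hnatR]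
    _ = ((n : ℝ) + 1) * (esymm (n + 1) k κ * (n.choose k : ℝ)) := by ring

lemma newton : ∀ (n : ℕ) (κ : Fin n → ℝ) (k : ℕ), 1 ≤ k → k + 1 ≤ n →
    pnorm n (k - 1) κ * pnorm n (k + 1) κ ≤ pnorm n k κ ^ 2 := by
  intro n
  induction n with
  | zero => intro κ k hk1 hkn; omega
  | succ n ih =>
    intro κ k hk1 hkn
    rcases eq_or_lt_of_le hkn with heq | hlt
    · have hk : k = n := by omega
      subst hk
      have h2 : 2 ≤ k + 1 := by omega
      have h := newton_top (k + 1) h2 κ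
      rw [show k + 1 - 2 = k - 1 by omega, show k + 1 - 1 = k by omega] at h
      exact h
    · obtain ⟨μ, hμ⟩ := pnorm_deriv n κ
      rw [← hμ k (by omega), ← hμ (k - 1) (by omega), ← hμ (k + 1) (by omega)]
      exact ih μ k hk1 (by omega)

lemma pow_chain (n m : ℕ) (hmn : m ≤ n) (κ : Fin n → ℝ)
    (hΓ : ∀ l : ℕ, 1 ≤ l → l ≤ m → 0 < pnorm n l κ) :
    ∀ k : ℕ, 1 ≤ k → k < m → pnorm n (k + 1) κ ^ k ≤ pnorm n k κ ^ (k + 1) := by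
  intro k
  induction k with
  | zero => intro h; omega
  | succ k ih =>
    intro _ hkm
    by_cases hk0 : k = 0
    · subst hk0
      have hnewton := newton n κ 1 le_rfl (by omega)
      rw [show (1 : ℕ) - 1 = 0 from rfl, pnorm_zero, one_mul] at hnewton
      simpa using hnewton
    · have hk1 : 1 ≤ k := by omega
      have ihk := ih hk1 (by omega)
      have hnewton := newton n κ (k + 1) (by omega) (by omega)
      rw [show k + 1 - 1 = k by omega] at hnewton
      have hpk : 0 < pnorm n k κ := hΓ k hk1 (by omega)
      have hpk1 : 0 < pnorm n (k + 1) κ := hΓ (k + 1) (by omega) (by omega)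
      have hpk2 : 0 < pnorm n (k + 2) κ := hΓ (k + 2) (by omega) (by omega)
      set p0 : ℝ := pnorm n k κ
      set p1 : ℝ := pnorm n (k + 1) κ
      set p2 : ℝ := pnorm n (k + 2) κ
      have h1 : p2 * p0 ≤ p1 ^ 2 := by
        linarith [hnewton]
      have e1 : (p2 * p0) ^ (k + 1) ≤ (p1 ^ 2) ^ (k + 1) :=
        pow_le_pow_left₀ (by positivity) h1 _
      have e2 : p2 ^ (k + 1) * p1 ^ k ≤ p2 ^ (k + 1) * p0 ^ (k + 1) :=
        mul_le_mul_of_nonneg_left ihk (by positivity)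
      have e3 : p2 ^ (k + 1) * p0 ^ (k + 1) = (p2 * p0) ^ (k + 1) := (mul_pow _ _ _).symm
      have e4 : (p1 ^ 2) ^ (k + 1) = p1 ^ (k + 1 + 1) * p1 ^ k := by
        rw [← pow_mul, ← pow_add]
        congr 1
        omega
      have e5 : p2 ^ (k + 1) * p1 ^ k ≤ p1 ^ (k + 1 + 1) * p1 ^ k := by
        calc p2 ^ (k + 1) * p1 ^ k ≤ p2 ^ (k + 1) * p0 ^ (k + 1) := e2
          _ = (p2 * p0) ^ (k + 1) := e3
          _ ≤ (p1 ^ 2) ^ (k + 1) := e1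
          _ = p1 ^ (k + 1 + 1) * p1 ^ k := e4
      exact le_of_mul_le_mul_right e5 (pow_pos hpk1 k)


/-- MacLaurin's inequality chain: if `κ ∈ Γ_m⁺` (i.e. `p_l(κ) > 0` for `1 ≤ l ≤ m`),
then `p₁(κ) ≥ p₂(κ)^{1/2} ≥ … ≥ p_m(κ)^{1/m}`. -/
theorem maclaurin_chain (n m : ℕ) (hmn : m ≤ n) (κ : Fin n → ℝ)
    (hΓ : ∀ l : ℕ, 1 ≤ l → l ≤ m → 0 < pnorm n l κ) :
    ∀ k : ℕ, 1 ≤ k → k < m →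
      (pnorm n (k + 1) κ) ^ ((1 : ℝ) / ((k : ℝ) + 1)) ≤
        (pnorm n k κ) ^ ((1 : ℝ) / (k : ℝ)) := by
  intro k hk1 hkm
  have hpow := pow_chain n m hmn κ hΓ k hk1 hkm
  have hpk : 0 < pnorm n k κ := hΓ k hk1 (by omega)
  have hpk1 : 0 < pnorm n (k + 1) κ := hΓ (k + 1) (by omega) (by omega)
  set a : ℝ := (pnorm n (k + 1) κ) ^ ((1 : ℝ) / ((k : ℝ) + 1)) with ha
  set b : ℝ := (pnorm n k κ) ^ ((1 : ℝ) / (k : ℝ)) with hb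
  have hkR : (0 : ℝ) < (k : ℝ) := by exact_mod_cast hk1
  have haN : a ^ (k * (k + 1)) = pnorm n (k + 1) κ ^ k := by
    rw [ha, ← Real.rpow_natCast ((pnorm n (k + 1) κ) ^ ((1 : ℝ) / ((k : ℝ) + 1))) (k * (k + 1)),
      ← Real.rpow_mul hpk1.le]
    rw [show (1 : ℝ) / ((k : ℝ) + 1) * ((k * (k + 1) : ℕ) : ℝ) = (k : ℝ) by
      push_cast; field_simp]
    exact Real.rpow_natCast _ k
  have hbN : b ^ (k * (k + 1)) = pnorm n k κ ^ (k + 1) := by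
    rw [hb, ← Real.rpow_natCast ((pnorm n k κ) ^ ((1 : ℝ) / (k : ℝ))) (k * (k + 1)),
      ← Real.rpow_mul hpk.le]
    rw [show (1 : ℝ) / (k : ℝ) * ((k * (k + 1) : ℕ) : ℝ) = ((k : ℝ) + 1) by
      push_cast; field_simp]
    rw [show ((k : ℝ) + 1) = ((k + 1 : ℕ) : ℝ) by push_cast; ring]
    exact Real.rpow_natCast _ (k + 1)
  have hN : a ^ (k * (k + 1)) ≤ b ^ (k * (k + 1)) := by
    rw [haN, hbN]; exact hpow
  have hapos : 0 ≤ a := (Real.rpow_pos_of_pos hpk1 _).le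
  have hbpos : 0 ≤ b := (Real.rpow_pos_of_pos hpk _).le
  exact (pow_le_pow_iff_left₀ hapos hbpos (by positivity)).1 hN
end
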